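/- For every δ ∈ ℝ and all bounded self-adjoint non-negative operators B₁, B₂ : X → X, the map B ↦ K(B,δ) = C₀A*(Γ + δ²MBM* + AC₀A*)⁻¹ satisfies the Lipschitz estimate ‖K(B₁,δ) − K(B₂,δ)‖ ≤ δ² ‖M‖² · ‖C₀‖·‖A‖·‖(Γ + AC₀A*)⁻¹‖² · ‖B₁ − B₂‖ in the operator norm. -/

import Mathlib

open ContinuousLinearMap
open scoped RealInnerProductSpace

section Aux

variable {Y : Type*} [NormedAddCommGroup Y] [InnerProductSpace ℝ Y] [CompleteSpace Y]

/-- Cauchy–Schwarz for the bilinear form of a positive operator. -/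
lemma pos_cs {S : Y →L[ℝ] Y} (hS : S.IsPositive) (u v : Y) :
    ⟪S u, v⟫ ^ 2 ≤ ⟪S u, u⟫ * ⟪S v, v⟫ := by
  have hsymm : ∀ a b : Y, ⟪S a, b⟫ = ⟪a, S b⟫ :=
    (ContinuousLinearMap.isSelfAdjoint_iff_isSymmetric.mp hS.isSelfAdjoint)
  have hnn : ∀ a : Y, 0 ≤ ⟪S a, a⟫ := fun a => by simpa using hS.inner_nonneg_left a
  have key : ∀ t : ℝ, 0 ≤ ⟪S v, v⟫ * (t * t) + (2 * ⟪S u, v⟫) * t + ⟪S u, u⟫ := by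
    intro t
    have h0 := hnn (u + t • v)
    have hexp : ⟪S (u + t • v), u + t • v⟫
        = ⟪S v, v⟫ * (t * t) + (2 * ⟪S u, v⟫) * t + ⟪S u, u⟫ := by
      have hvu : ⟪S v, u⟫ = ⟪S u, v⟫ := by
        rw [hsymm v u, real_inner_comm]
      simp only [map_add, map_smul, inner_add_left, inner_add_right,
        real_inner_smul_left, real_inner_smul_right]
      rw [hvu]; ring
    linarith [hexp ▸ h0]
  have hd := discrim_le_zero key
  rw [discrim] at hd
  nlinarith [hd]

/-- A positive-definite operator on a finite-dimensional space is a unit. -/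
lemma isUnit_of_posdef [FiniteDimensional ℝ Y] {T : Y →L[ℝ] Y}
    (h : ∀ y : Y, y ≠ 0 → 0 < ⟪T y, y⟫) : IsUnit T := by
  have hinj : Function.Injective T := by
    intro a b hab
    by_contra hne
    have hsub : a - b ≠ 0 := sub_ne_zero.mpr hne
    have h1 := h (a - b) hsub
    have h2 : T (a - b) = 0 := by rw [map_sub, hab, sub_self]
    rw [h2] at h1
    simp at h1
  have hinj' : Function.Injective (T : Y →ₗ[ℝ] Y) := hinj
  have hsurj : Function.Surjective (T : Y →ₗ[ℝ] Y) :=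
    LinearMap.injective_iff_surjective.mp hinj'
  let e : Y ≃ₗ[ℝ] Y := LinearEquiv.ofBijective (T : Y →ₗ[ℝ] Y) ⟨hinj', hsurj⟩
  let Tinv : Y →L[ℝ] Y := LinearMap.toContinuousLinearMap e.symm.toLinearMap
  refine isUnit_iff_exists.mpr ⟨Tinv, ?_, ?_⟩
  · ext y
    have : T (e.symm y) = y := e.apply_symm_apply y
    simpa [Tinv, ContinuousLinearMap.mul_apply] using this
  · ext y
    have : e.symm (T y) = y := e.symm_apply_apply y
    simpa [Tinv, ContinuousLinearMap.mul_apply] using this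

/-- Loewner-type monotonicity of inverse norms: if `0 ≤ S ≤ T` (as quadratic forms)
and both are invertible, then `‖T⁻¹‖ ≤ ‖S⁻¹‖`. -/
lemma inv_norm_mono {S T : Y →L[ℝ] Y} (hS : S.IsPositive)
    (hST : ∀ x : Y, ⟪S x, x⟫ ≤ ⟪T x, x⟫) (hSu : IsUnit S) (hTu : IsUnit T) :
    ‖Ring.inverse T‖ ≤ ‖Ring.inverse S‖ := by
  set S' := Ring.inverse S with hS'def
  set T' := Ring.inverse T with hT'def
  have hS1 : S * S' = 1 := Ring.mul_inverse_cancel _ hSu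
  have hT1 : T * T' = 1 := Ring.mul_inverse_cancel _ hTu
  have hsymm : ∀ a b : Y, ⟪S a, b⟫ = ⟪a, S b⟫ :=
    (ContinuousLinearMap.isSelfAdjoint_iff_isSymmetric.mp hS.isSelfAdjoint)
  have hnn : ∀ a : Y, 0 ≤ ⟪S a, a⟫ := fun a => by simpa using hS.inner_nonneg_left a
  have key : ∀ x : Y, ‖x‖ ≤ ‖S'‖ * ‖T x‖ := by
    intro x
    rcases eq_or_ne x 0 with rfl | hx
    · simp
    have hSS' : S (S' x) = x := by
      rw [← ContinuousLinearMap.mul_apply, hS1, ContinuousLinearMap.one_apply]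
    have h1 : ⟪S x, S' x⟫ = ‖x‖ ^ 2 := by
      rw [hsymm x (S' x), hSS', real_inner_self_eq_norm_sq]
    have h2 := pos_cs hS x (S' x)
    rw [h1, hSS'] at h2
    -- h2 : (‖x‖^2)^2 ≤ ⟪S x, x⟫ * ⟪x, S' x⟫  (note ⟪S(S'x), S'x⟫ rewrote via hSS')
    have h3 : ⟪x, S' x⟫ ≤ ‖S'‖ * ‖x‖ ^ 2 := by
      calc ⟪x, S' x⟫ ≤ ‖x‖ * ‖S' x‖ := real_inner_le_norm x (S' x)
        _ ≤ ‖x‖ * (‖S'‖ * ‖x‖) := by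
            have := S'.le_opNorm x
            have hxnn : (0:ℝ) ≤ ‖x‖ := norm_nonneg x
            nlinarith
        _ = ‖S'‖ * ‖x‖ ^ 2 := by ring
    have h4 : ⟪S x, x⟫ ≤ ‖T x‖ * ‖x‖ :=
      (hST x).trans (real_inner_le_norm (T x) x)
    have h5 : 0 ≤ ⟪S x, x⟫ := hnn x
    have h6 : 0 ≤ ⟪x, S' x⟫ := by
      have := hnn (S' x); rwa [hSS'] at this
    have hxpos : 0 < ‖x‖ := norm_pos_iff.mpr hx
    nlinarith [norm_nonneg (T x), norm_nonneg S', pow_pos hxpos 3, pow_pos hxpos 2,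
      mul_le_mul h4 h3 h6 (by positivity : (0:ℝ) ≤ ‖T x‖ * ‖x‖)]
  refine ContinuousLinearMap.opNorm_le_bound _ (norm_nonneg S') fun y => ?_
  have hTT' : T (T' y) = y := by
    rw [← ContinuousLinearMap.mul_apply, hT1, ContinuousLinearMap.one_apply]
  calc ‖T' y‖ ≤ ‖S'‖ * ‖T (T' y)‖ := key _
    _ = ‖S'‖ * ‖y‖ := by rw [hTT']

/-- A nonnegative scalar multiple of a positive operator is positive. -/
lemma smul_isPositive {c : ℝ} (hc : 0 ≤ c) {T : Y →L[ℝ] Y} (hT : T.IsPositive) :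
    (c • T).IsPositive := by
  constructor
  · have h := hT.isSelfAdjoint
    rw [isSelfAdjoint_iff] at h
    exact ContinuousLinearMap.isSelfAdjoint_iff_isSymmetric.mp
      (isSelfAdjoint_iff.mpr (by rw [star_smul, h, star_trivial]))
  · intro x
    have := hT.inner_nonneg_left x
    simp only [ContinuousLinearMap.reApplyInnerSelf, ContinuousLinearMap.smul_apply,
      real_inner_smul_left] at *
    exact mul_nonneg hc this

end Aux

/-- The operator `K(B,δ) = C₀ A* (Γ + δ² M B M* + A C₀ A*)⁻¹ : Y → X`. -/
noncomputable def Kop {X Y : Type*}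
    [NormedAddCommGroup X] [InnerProductSpace ℝ X] [CompleteSpace X]
    [NormedAddCommGroup Y] [InnerProductSpace ℝ Y] [FiniteDimensional ℝ Y]
    (A M : X →L[ℝ] Y) (C₀ : X →L[ℝ] X) (Γ : Y →L[ℝ] Y)
    (B : X →L[ℝ] X) (δ : ℝ) : Y →L[ℝ] X :=
  C₀ ∘L (adjoint A) ∘L
    Ring.inverse (Γ + δ ^ 2 • (M ∘L B ∘L adjoint M) + A ∘L C₀ ∘L adjoint A)

set_option maxHeartbeats 2000000 in
/-- Lipschitz estimate for `B ↦ K(B,δ)`: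
`‖K(B₁,δ) − K(B₂,δ)‖ ≤ δ²‖M‖²·‖C₀‖·‖A‖·‖(Γ + A C₀ A*)⁻¹‖²·‖B₁ − B₂‖`. -/
theorem stmt_5 {X Y : Type*}
    [NormedAddCommGroup X] [InnerProductSpace ℝ X] [CompleteSpace X]
    [NormedAddCommGroup Y] [InnerProductSpace ℝ Y] [FiniteDimensional ℝ Y]
    (A M : X →L[ℝ] Y) (C₀ : X →L[ℝ] X) (Γ : Y →L[ℝ] Y)
    (hC₀ : C₀.IsPositive) (hΓ : Γ.IsPositive)
    (hΓpos : ∀ y : Y, y ≠ 0 → 0 < ⟪Γ y, y⟫)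
    (δ : ℝ) (B₁ B₂ : X →L[ℝ] X) (hB₁ : B₁.IsPositive) (hB₂ : B₂.IsPositive) :
    ‖Kop A M C₀ Γ B₁ δ - Kop A M C₀ Γ B₂ δ‖ ≤
      δ ^ 2 * ‖M‖ ^ 2 * (‖C₀‖ * ‖A‖ *
        ‖Ring.inverse (Γ + A ∘L C₀ ∘L adjoint A)‖ ^ 2) * ‖B₁ - B₂‖ := by
  set T₁ := Γ + δ ^ 2 • (M ∘L B₁ ∘L adjoint M) + A ∘L C₀ ∘L adjoint A with hT₁def
  set T₂ := Γ + δ ^ 2 • (M ∘L B₂ ∘L adjoint M) + A ∘L C₀ ∘L adjoint A with hT₂def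
  set S₀ := Γ + A ∘L C₀ ∘L adjoint A with hS₀def
  -- positivity facts
  have hP₁ : (δ ^ 2 • (M ∘L B₁ ∘L adjoint M)).IsPositive :=
    smul_isPositive (sq_nonneg δ) (hB₁.conj_adjoint M)
  have hP₂ : (δ ^ 2 • (M ∘L B₂ ∘L adjoint M)).IsPositive :=
    smul_isPositive (sq_nonneg δ) (hB₂.conj_adjoint M)
  have hAC : (A ∘L C₀ ∘L adjoint A).IsPositive := hC₀.conj_adjoint A
  have innn : ∀ (P : Y →L[ℝ] Y), P.IsPositive → ∀ y : Y, 0 ≤ ⟪P y, y⟫ :=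
    fun P hP y => by simpa using hP.inner_nonneg_left y
  have hS₀pos : S₀.IsPositive := hΓ.add hAC
  have hT₁pos : T₁.IsPositive := (hΓ.add hP₁).add hAC
  have hT₂pos : T₂.IsPositive := (hΓ.add hP₂).add hAC
  -- definiteness and units
  have hdef : ∀ (P : Y →L[ℝ] Y), P.IsPositive →
      (∀ y : Y, y ≠ 0 → 0 < ⟪(Γ + P) y, y⟫) := by
    intro P hP y hy
    have h1 := hΓpos y hy
    have h2 := innn P hP y
    simp only [ContinuousLinearMap.add_apply, inner_add_left]
    linarith
  have hu₀ : IsUnit S₀ := isUnit_of_posdef (hdef _ hAC)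
  have hu₁ : IsUnit T₁ := by
    refine isUnit_of_posdef ?_
    have : T₁ = Γ + (δ ^ 2 • (M ∘L B₁ ∘L adjoint M) + A ∘L C₀ ∘L adjoint A) := by
      rw [hT₁def, add_assoc]
    rw [this]
    exact hdef _ (hP₁.add hAC)
  have hu₂ : IsUnit T₂ := by
    refine isUnit_of_posdef ?_
    have : T₂ = Γ + (δ ^ 2 • (M ∘L B₂ ∘L adjoint M) + A ∘L C₀ ∘L adjoint A) := by
      rw [hT₂def, add_assoc]
    rw [this]
    exact hdef _ (hP₂.add hAC)
  set R₁ := Ring.inverse T₁ with hR₁def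
  set R₂ := Ring.inverse T₂ with hR₂def
  set R₀ := Ring.inverse S₀ with hR₀def
  -- comparison of inverse norms
  have hmono₁ : ‖R₁‖ ≤ ‖R₀‖ := by
    refine inv_norm_mono hS₀pos (fun x => ?_) hu₀ hu₁
    have h2 := innn _ hP₁ x
    simp only [hT₁def, hS₀def, ContinuousLinearMap.add_apply, inner_add_left]
    linarith
  have hmono₂ : ‖R₂‖ ≤ ‖R₀‖ := by
    refine inv_norm_mono hS₀pos (fun x => ?_) hu₀ hu₂
    have h2 := innn _ hP₂ x
    simp only [hT₂def, hS₀def, ContinuousLinearMap.add_apply, inner_add_left]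
    linarith
  -- resolvent identity
  have h₁ : R₁ * T₁ = 1 := Ring.inverse_mul_cancel _ hu₁
  have h₂ : T₂ * R₂ = 1 := Ring.mul_inverse_cancel _ hu₂
  have hres : R₁ - R₂ = R₁ * (T₂ - T₁) * R₂ := by
    rw [mul_sub, sub_mul, mul_assoc R₁ T₂ R₂, h₂, mul_one, h₁, one_mul]
  set D := M ∘L (B₂ - B₁) ∘L adjoint M with hDdef
  have hdiff : T₂ - T₁ = δ ^ 2 • D := by
    rw [hT₂def, hT₁def, hDdef]
    have : (B₂ - B₁) ∘L adjoint M = B₂ ∘L adjoint M - B₁ ∘L adjoint M := by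
      ext x; simp
    rw [this]
    have : M ∘L (B₂ ∘L adjoint M - B₁ ∘L adjoint M)
        = M ∘L B₂ ∘L adjoint M - M ∘L B₁ ∘L adjoint M := by
      ext x; simp
    rw [this, smul_sub]
    abel
  have hRR : R₁ - R₂ = δ ^ 2 • (R₁ ∘L (D ∘L R₂)) := by
    rw [hres, hdiff]
    ext x
    simp [ContinuousLinearMap.mul_apply, map_smul]
  -- difference of K's
  have hKdiff : Kop A M C₀ Γ B₁ δ - Kop A M C₀ Γ B₂ δ
      = δ ^ 2 • (C₀ ∘L (adjoint A ∘L (R₁ ∘L (D ∘L R₂)))) := by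
    have : Kop A M C₀ Γ B₁ δ - Kop A M C₀ Γ B₂ δ
        = C₀ ∘L (adjoint A ∘L (R₁ - R₂)) := by
      simp only [Kop, ← hT₁def, ← hT₂def, ← hR₁def, ← hR₂def]
      ext x; simp
    rw [this, hRR]
    ext x; simp
  rw [hKdiff]
  refine le_trans (ContinuousLinearMap.opNorm_smul_le (δ ^ 2)
    (C₀ ∘L ((adjoint A) ∘L (R₁ ∘L (D ∘L R₂))))) ?_
  rw [Real.norm_eq_abs, abs_of_nonneg (sq_nonneg δ)]
  have hDle : ‖D‖ ≤ ‖M‖ * (‖B₁ - B₂‖ * ‖M‖) := by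
    calc ‖M ∘L ((B₂ - B₁) ∘L adjoint M)‖
        ≤ ‖M‖ * ‖(B₂ - B₁) ∘L adjoint M‖ := opNorm_comp_le _ _
      _ ≤ ‖M‖ * (‖B₂ - B₁‖ * ‖adjoint M‖) := by
          have := opNorm_comp_le (B₂ - B₁) (adjoint M)
          nlinarith [norm_nonneg M]
      _ = ‖M‖ * (‖B₁ - B₂‖ * ‖M‖) := by
          rw [norm_sub_rev, LinearIsometryEquiv.norm_map]
  have hchain : ‖C₀ ∘L (adjoint A ∘L (R₁ ∘L (D ∘L R₂)))‖
      ≤ ‖C₀‖ * (‖A‖ * (‖R₁‖ * (‖D‖ * ‖R₂‖))) := by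
    calc ‖C₀ ∘L (adjoint A ∘L (R₁ ∘L (D ∘L R₂)))‖
        ≤ ‖C₀‖ * ‖adjoint A ∘L (R₁ ∘L (D ∘L R₂))‖ := opNorm_comp_le _ _
      _ ≤ ‖C₀‖ * (‖adjoint A‖ * ‖R₁ ∘L (D ∘L R₂)‖) := by
          have := opNorm_comp_le (adjoint A) (R₁ ∘L (D ∘L R₂))
          nlinarith [norm_nonneg C₀]
      _ ≤ ‖C₀‖ * (‖adjoint A‖ * (‖R₁‖ * ‖D ∘L R₂‖)) := by
          have := opNorm_comp_le R₁ (D ∘L R₂)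
          have h0 : (0:ℝ) ≤ ‖C₀‖ * ‖adjoint A‖ := by positivity
          nlinarith [norm_nonneg C₀, norm_nonneg (adjoint A)]
      _ ≤ ‖C₀‖ * (‖adjoint A‖ * (‖R₁‖ * (‖D‖ * ‖R₂‖))) := by
          have := opNorm_comp_le D R₂
          have h0 : (0:ℝ) ≤ ‖C₀‖ * ‖adjoint A‖ * ‖R₁‖ := by positivity
          nlinarith [norm_nonneg C₀, norm_nonneg (adjoint A), norm_nonneg R₁]
      _ = ‖C₀‖ * (‖A‖ * (‖R₁‖ * (‖D‖ * ‖R₂‖))) := by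
          rw [LinearIsometryEquiv.norm_map]
  calc δ ^ 2 * ‖C₀ ∘L (adjoint A ∘L (R₁ ∘L (D ∘L R₂)))‖
      ≤ δ ^ 2 * (‖C₀‖ * (‖A‖ * (‖R₁‖ * (‖D‖ * ‖R₂‖)))) := by
        have := sq_nonneg δ
        nlinarith [hchain]
    _ ≤ δ ^ 2 * (‖C₀‖ * (‖A‖ * (‖R₀‖ * ((‖M‖ * (‖B₁ - B₂‖ * ‖M‖)) * ‖R₀‖)))) := by
        gcongr
    _ = δ ^ 2 * ‖M‖ ^ 2 * (‖C₀‖ * ‖A‖ * ‖R₀‖ ^ 2) * ‖B₁ - B₂‖ := by ring
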